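/- For every integer k ≥ 1, the following identity holds in the field ℚ(q₁,q₂): (1−q₁q₂)^k · ∏_{1≤i≠j≤k} (q₁^{−i} − q₁q₂·q₁^{−j})/(q₁^{−i} − q₂·q₁^{−j}) · ∏_{i=1}^{k} (q₁^{i−1} − q₂) = q₁^{k(k−1)/2} · (1−q₂)^k · ∏_{i=1}^{k} (1 − q₁^{i} q₂). -/

import Mathlib

open MvPolynomial

noncomputable section

/-- The field `F = ℚ(q₁,q₂)` of rational functions in two variables over `ℚ`. -/
abbrev F : Type := FractionRing (MvPolynomial (Fin 2) ℚ)

/-- The variable `q₁ ∈ F`. -/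
def q1 : F := algebraMap (MvPolynomial (Fin 2) ℚ) F (X 0)

/-- The variable `q₂ ∈ F`. -/
def q2 : F := algebraMap (MvPolynomial (Fin 2) ℚ) F (X 1)

lemma hinj : Function.Injective (algebraMap (MvPolynomial (Fin 2) ℚ) F) :=
  IsFractionRing.injective _ _

lemma hq1 : q1 ≠ 0 := by
  intro h
  exact MvPolynomial.X_ne_zero 0 (hinj (by simpa [q1] using h))

/-- The auxiliary function `u d = 1 - q₁^d q₂`. -/
def u (d : ℤ) : F := 1 - q1 ^ d * q2

lemma hu (d : ℤ) : u d ≠ 0 := by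
  intro h
  have h1 : q1 ^ d * q2 = 1 := by
    have := sub_eq_zero.mp h
    linear_combination -this
  rcases le_or_gt 0 d with hd | hd
  · obtain ⟨n, rfl⟩ := Int.eq_ofNat_of_zero_le hd
    rw [zpow_natCast] at h1
    have h2 : (X 0 : MvPolynomial (Fin 2) ℚ) ^ n * X 1 = 1 := by
      apply hinj; rw [map_mul, map_pow, map_one]; exact h1
    have h3 := congrArg constantCoeff h2
    simp [constantCoeff_X] at h3
  · set n : ℕ := (-d).toNat with hn
    have hdn : d = -(n : ℤ) := by omega
    have hpos : 0 < n := by omega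
    rw [hdn, zpow_neg, zpow_natCast] at h1
    have h2 : q2 = q1 ^ n := by
      have hne : q1 ^ n ≠ 0 := pow_ne_zero _ hq1
      field_simp at h1
      exact h1
    have h3 : (X 1 : MvPolynomial (Fin 2) ℚ) = X 0 ^ n := by
      apply hinj; rw [map_pow]; exact h2
    have h4 := congrArg (eval (fun i : Fin 2 => if i = 0 then 0 else 1)) h3
    simp [eval_X, hpos.ne'] at h4

lemma factor_eq (i j : ℕ) :
    (q1 ^ (-(i : ℤ)) - q1 * q2 * q1 ^ (-(j : ℤ))) / (q1 ^ (-(i : ℤ)) - q2 * q1 ^ (-(j : ℤ)))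
      = u ((i : ℤ) - j + 1) / u ((i : ℤ) - j) := by
  have hnum : q1 ^ (-(i : ℤ)) - q1 * q2 * q1 ^ (-(j : ℤ))
      = q1 ^ (-(i : ℤ)) * u ((i : ℤ) - j + 1) := by
    rw [u, mul_sub, mul_one, ← mul_assoc, ← zpow_add₀ hq1]
    have : -(i : ℤ) + ((i : ℤ) - j + 1) = 1 + -(j : ℤ) := by ring
    rw [this, zpow_add₀ hq1, zpow_one]
    ring
  have hden : q1 ^ (-(i : ℤ)) - q2 * q1 ^ (-(j : ℤ))
      = q1 ^ (-(i : ℤ)) * u ((i : ℤ) - j) := by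
    rw [u, mul_sub, mul_one, ← mul_assoc, ← zpow_add₀ hq1]
    have : -(i : ℤ) + ((i : ℤ) - j) = -(j : ℤ) := by ring
    rw [this]
    ring
  rw [hnum, hden, mul_div_mul_left _ _ (zpow_ne_zero _ hq1)]

lemma tele (i : ℤ) (k : ℕ) :
    ∏ j ∈ Finset.Icc 1 k, (u (i - j + 1) / u (i - j)) = u i / u (i - k) := by
  induction k with
  | zero => simp [div_self (hu i)]
  | succ k ih =>
    rw [Finset.prod_Icc_succ_top (Nat.le_add_left 1 k), ih]
    have h1 := hu (i - k)
    have h2 := hu (i - (k + 1 : ℕ))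
    have h3 : i - ((k : ℤ) + 1) + 1 = i - k := by ring
    push_cast
    push_cast at h2
    rw [h3]
    field_simp

lemma diag_filter (k : ℕ) :
    ((Finset.Icc 1 k ×ˢ Finset.Icc 1 k).filter (fun p => ¬ p.1 ≠ p.2))
      = (Finset.Icc 1 k).image (fun i => (i, i)) := by
  ext ⟨a, b⟩
  simp only [Finset.mem_filter, Finset.mem_product, Finset.mem_image, not_not, Prod.mk.injEq]
  constructor
  · rintro ⟨⟨ha, _⟩, rfl⟩; exact ⟨a, ha, rfl, rfl⟩
  · rintro ⟨i, hi, rfl, rfl⟩; exact ⟨⟨hi, hi⟩, rfl⟩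

lemma reflect (k : ℕ) :
    ∏ i ∈ Finset.Icc 1 k, u ((i : ℤ) - k) = ∏ i ∈ Finset.Icc 1 k, u (1 - (i : ℤ)) := by
  refine Finset.prod_bij' (fun a _ => k + 1 - a) (fun a _ => k + 1 - a) ?_ ?_ ?_ ?_ ?_ <;>
    intro a ha <;> simp only [Finset.mem_Icc] at ha ⊢
  · omega
  · omega
  · omega
  · omega
  · congr 1; omega

lemma last_factor (i : ℕ) (hi : 1 ≤ i) :
    q1 ^ (i - 1) - q2 = q1 ^ (i - 1) * u (1 - (i : ℤ)) := by
  rw [u, mul_sub, mul_one, ← zpow_natCast q1 (i - 1), ← mul_assoc, ← zpow_add₀ hq1]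
  have : ((i - 1 : ℕ) : ℤ) + (1 - (i : ℤ)) = 0 := by omega
  rw [this, zpow_zero, one_mul]

/-- For every `k ≥ 1`, in `ℚ(q₁,q₂)`:
`(1−q₁q₂)^k · ∏_{1≤i≠j≤k} (q₁^{−i} − q₁q₂·q₁^{−j})/(q₁^{−i} − q₂·q₁^{−j})
  · ∏_{i=1}^{k} (q₁^{i−1} − q₂)
  = q₁^{k(k−1)/2} · (1−q₂)^k · ∏_{i=1}^{k} (1 − q₁^{i} q₂)`. -/
theorem evaluation_identity_Ak (k : ℕ) (hk : 1 ≤ k) :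
    (1 - q1 * q2) ^ k *
      (∏ p ∈ (Finset.Icc 1 k ×ˢ Finset.Icc 1 k).filter (fun p => p.1 ≠ p.2),
        (q1 ^ (-(p.1 : ℤ)) - q1 * q2 * q1 ^ (-(p.2 : ℤ))) /
          (q1 ^ (-(p.1 : ℤ)) - q2 * q1 ^ (-(p.2 : ℤ)))) *
      ∏ i ∈ Finset.Icc 1 k, (q1 ^ (i - 1) - q2)
    = q1 ^ (k * (k - 1) / 2) * (1 - q2) ^ k *
        ∏ i ∈ Finset.Icc 1 k, (1 - q1 ^ i * q2) := by
  set s := Finset.Icc 1 k with hs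
  set g : ℕ × ℕ → F := fun p => u ((p.1 : ℤ) - p.2 + 1) / u ((p.1 : ℤ) - p.2) with hg
  have h1 : (∏ p ∈ (s ×ˢ s).filter (fun p => p.1 ≠ p.2),
        (q1 ^ (-(p.1 : ℤ)) - q1 * q2 * q1 ^ (-(p.2 : ℤ))) /
          (q1 ^ (-(p.1 : ℤ)) - q2 * q1 ^ (-(p.2 : ℤ))))
      = ∏ p ∈ (s ×ˢ s).filter (fun p => p.1 ≠ p.2), g p :=
    Finset.prod_congr rfl fun p _ => factor_eq p.1 p.2
  have hfull : ∏ p ∈ s ×ˢ s, g p = ∏ i ∈ s, (u i / u ((i : ℤ) - k)) := by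
    rw [Finset.prod_product]
    exact Finset.prod_congr rfl fun i _ => tele i k
  have hdiag : ∏ p ∈ (s ×ˢ s).filter (fun p => ¬ p.1 ≠ p.2), g p = (u 1 / u 0) ^ k := by
    rw [hs, diag_filter, Finset.prod_image (fun x _ y _ h => (Prod.mk.injEq x x y y ▸ h).1)]
    have : ∀ i ∈ Finset.Icc 1 k, g (i, i) = u 1 / u 0 := by
      intro i _; simp [hg]
    rw [Finset.prod_congr rfl this, Finset.prod_const, Nat.card_Icc, Nat.add_sub_cancel]
  have hdiag_ne : (u 1 / u 0) ^ k ≠ 0 := pow_ne_zero _ (div_ne_zero (hu 1) (hu 0))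
  have h2 : ∏ p ∈ (s ×ˢ s).filter (fun p => p.1 ≠ p.2), g p
      = (∏ i ∈ s, (u i / u ((i : ℤ) - k))) / (u 1 / u 0) ^ k := by
    rw [eq_div_iff hdiag_ne, ← hdiag, Finset.prod_filter_mul_prod_filter_not, hfull]
  have h3 : ∏ i ∈ s, (q1 ^ (i - 1) - q2)
      = (∏ i ∈ s, q1 ^ (i - 1)) * ∏ i ∈ s, u (1 - (i : ℤ)) := by
    rw [← Finset.prod_mul_distrib]
    exact Finset.prod_congr rfl fun i hi => last_factor i (Finset.mem_Icc.mp hi).1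
  have h4 : (∏ i ∈ s, q1 ^ (i - 1)) = q1 ^ (k * (k - 1) / 2) := by
    rw [Finset.prod_pow_eq_pow_sum]
    congr 1
    rw [hs, ← Finset.Ico_add_one_right_eq_Icc, Finset.sum_Ico_eq_sum_range]
    simp only [Nat.add_sub_cancel, Nat.add_sub_cancel_left]
    exact Finset.sum_range_id k
  have h5 : ∏ i ∈ s, u (1 - (i : ℤ)) = ∏ i ∈ s, u ((i : ℤ) - k) := (reflect k).symm
  have h6 : ∏ i ∈ s, (1 - q1 ^ i * q2) = ∏ i ∈ s, u (i : ℤ) :=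
    Finset.prod_congr rfl fun i _ => by simp [u, zpow_natCast]
  have h7 : (1 - q1 * q2) = u 1 := by simp [u]
  have h8 : (1 - q2) = u 0 := by simp [u]
  rw [h1, h2, h3, h4, h5, h6, h7, h8]
  rw [Finset.prod_div_distrib]
  have ha : (∏ i ∈ s, u ((i : ℤ) - k)) ≠ 0 := Finset.prod_ne_zero_iff.mpr fun i _ => hu _
  have hb := hu 1
  have hc := hu 0
  field_simp
  have e : (u 1 / u 0) ^ k * u 0 ^ k = u 1 ^ k := by rw [div_pow, div_mul_cancel₀ _ (pow_ne_zero _ hc)]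
  linear_combination (-(∏ x ∈ s, u (x : ℤ)) * q1 ^ (k * (k - 1) / 2)) * e
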